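/- The consecutive patterns 112 and 122 are equidistributed on 𝓕_n for every n ≥ 1: for all n ≥ 1 and all k ≥ 0, the number of π ∈ 𝓕_n with #112(π) = k equals the number of π ∈ 𝓕_n with #122(π) = k. -/

import Mathlib

open scoped BigOperators

/-- `w` is a Catalan word: it is nonempty, starts with `1`, and each subsequent
letter lies between `1` and the previous letter plus one. -/
def IsCatalan (w : List ℕ) : Prop :=
  w ≠ [] ∧ w.getD 0 0 = 1 ∧
    ∀ i, i + 1 < w.length →
      1 ≤ w.getD (i + 1) 0 ∧ w.getD (i + 1) 0 ≤ w.getD i 0 + 1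

/-- `i` is the starting index of a maximal weakly increasing run of `w`. -/
def RunStart (w : List ℕ) (i : ℕ) : Prop :=
  i < w.length ∧ (i = 0 ∨ w.getD i 0 < w.getD (i - 1) 0)

/-- `w` is flattened: the first letters of its increasing runs, read left to
right, form a weakly nondecreasing sequence. -/
def IsFlattened (w : List ℕ) : Prop :=
  ∀ i j, RunStart w i → RunStart w j → i ≤ j → w.getD i 0 ≤ w.getD j 0

/-- The set of flattened Catalan words of length `n`. -/
def FlatCat (n : ℕ) : Set (List ℕ) :=
  {w | w.length = n ∧ IsCatalan w ∧ IsFlattened w}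

/-- `i` is the starting index of an occurrence of the consecutive pattern `τ`
in the word `w`, i.e. the factor of `w` of length `|τ|` starting at `i` is
order-isomorphic to `τ`. -/
def OccAt (τ w : List ℕ) (i : ℕ) : Prop :=
  i + τ.length ≤ w.length ∧
    ∀ s < τ.length, ∀ t < τ.length,
      (w.getD (i + s) 0 < w.getD (i + t) 0 ↔ τ.getD s 0 < τ.getD t 0)

/-- The number of occurrences of the consecutive pattern `τ` in `w`. -/
noncomputable def numOcc (τ w : List ℕ) : ℕ :=
  Set.ncard {i | OccAt τ w i}

/-- The number of distinct letters in the terminal (rightmost) increasing run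
of `w`, i.e. in the longest weakly increasing suffix of `w`. -/
noncomputable def trun (w : List ℕ) : ℕ :=
  ((w.drop (sInf {i | List.Chain' (· ≤ ·) (w.drop i)})).toFinset).card

/-- The total number of occurrences of the consecutive pattern `τ` over all
flattened Catalan words of length `n`. -/
noncomputable def tot (n : ℕ) (τ : List ℕ) : ℕ :=
  ∑ᶠ w ∈ FlatCat n, numOcc τ w


open List

namespace EquiAux

def CStep (a b : ℕ) : Prop := 1 ≤ b ∧ b ≤ a + 1

lemma chain'_iff_getD {R : ℕ → ℕ → Prop} {l : List ℕ} :
    Chain' R l ↔ ∀ i, i + 1 < l.length → R (l.getD i 0) (l.getD (i+1) 0) := by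
  simp only [List.Chain']
  rw [List.isChain_iff_getElem]
  constructor
  · intro h i hi
    rw [List.getD_eq_getElem l 0 (by omega), List.getD_eq_getElem l 0 hi]
    exact h i (by omega)
  · intro h i hi
    have := h i (by omega)
    rw [List.getD_eq_getElem l 0 (by omega), List.getD_eq_getElem l 0 (by omega)] at this
    simpa [List.get_eq_getElem] using this

lemma getLastD_eq_getD {l : List ℕ} (h : l ≠ []) :
    l.getLastD 0 = l.getD (l.length - 1) 0 := by
  rw [List.getD_eq_getElem l 0 (by have := List.length_pos_iff.mpr h; omega)]
  rw [List.getLastD_eq_getLast? , List.getLast?_eq_getLast h]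
  simp [List.getLast_eq_getElem]

lemma head?_eq {l : List ℕ} (h : l ≠ []) : l.head? = some (l.getD 0 0) := by
  cases l with
  | nil => simp at h
  | cons a t => simp

lemma getLast?_eq {l : List ℕ} (h : l ≠ []) : l.getLast? = some (l.getLastD 0) := by
  rw [List.getLast?_eq_getLast h, List.getLastD_eq_getLast? , List.getLast?_eq_getLast h]
  simp

lemma chain'_le_mono {l : List ℕ} (hc : Chain' (· ≤ ·) l) {i j : ℕ}
    (hij : i ≤ j) (hj : j < l.length) : l.getD i 0 ≤ l.getD j 0 := by
  rcases eq_or_lt_of_le hij with rfl | hlt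
  · rfl
  · have hp := List.isChain_iff_pairwise.mp hc
    rw [List.pairwise_iff_getElem] at hp
    rw [List.getD_eq_getElem l 0 (by omega), List.getD_eq_getElem l 0 hj]
    exact hp i j (by omega) hj hlt

lemma chain'_le_last {l : List ℕ} (hc : Chain' (· ≤ ·) l) {k : ℕ}
    (hk : k < l.length) : l.getD k 0 ≤ l.getLastD 0 := by
  have hne : l ≠ [] := by intro h; subst h; simp at hk
  rw [getLastD_eq_getD hne]
  exact chain'_le_mono hc (by omega) (by omega)

lemma chain'_le_head {l : List ℕ} (hc : Chain' (· ≤ ·) l) {k : ℕ}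
    (hk : k < l.length) : l.getD 0 0 ≤ l.getD k 0 :=
  chain'_le_mono hc (by omega) hk

end EquiAux

namespace EquiAux

def P112 (x y z : ℕ) : Prop := x = y ∧ y < z
def P122 (x y z : ℕ) : Prop := x < y ∧ y = z

def occ3 (P : ℕ → ℕ → ℕ → Prop) (w : List ℕ) : Set ℕ :=
  {i | i + 3 ≤ w.length ∧ P (w.getD i 0) (w.getD (i+1) 0) (w.getD (i+2) 0)}

lemma occ3_finite (P : ℕ → ℕ → ℕ → Prop) (w : List ℕ) : (occ3 P w).Finite := by
  apply (Set.finite_Iio w.length).subset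
  intro i hi
  exact Set.mem_Iio.mpr (by have := hi.1; omega)

lemma occAt_112 (w : List ℕ) (i : ℕ) : OccAt [1,1,2] w i ↔ i ∈ occ3 P112 w := by
  unfold OccAt occ3 P112
  simp only [List.length_cons, List.length_nil, Set.mem_setOf_eq]
  constructor
  · rintro ⟨h1, h2⟩
    refine ⟨by omega, ?_, ?_⟩
    · have a := h2 0 (by omega) 1 (by omega)
      have b := h2 1 (by omega) 0 (by omega)
      simp only [List.getD_cons_zero, List.getD_cons_succ, Nat.add_zero] at a b
      omega
    · have a := h2 1 (by omega) 2 (by omega)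
      simp only [List.getD_cons_zero, List.getD_cons_succ, Nat.add_zero] at a
      omega
  · rintro ⟨h1, h2, h3⟩
    refine ⟨by omega, ?_⟩
    intro s hs t ht
    interval_cases s <;> interval_cases t <;>
      simp only [List.getD_cons_zero, List.getD_cons_succ, Nat.add_zero] <;> omega

lemma occAt_122 (w : List ℕ) (i : ℕ) : OccAt [1,2,2] w i ↔ i ∈ occ3 P122 w := by
  unfold OccAt occ3 P122
  simp only [List.length_cons, List.length_nil, Set.mem_setOf_eq]
  constructor
  · rintro ⟨h1, h2⟩
    refine ⟨by omega, ?_, ?_⟩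
    · have a := h2 0 (by omega) 1 (by omega)
      simp only [List.getD_cons_zero, List.getD_cons_succ, Nat.add_zero] at a
      omega
    · have a := h2 1 (by omega) 2 (by omega)
      have b := h2 2 (by omega) 1 (by omega)
      simp only [List.getD_cons_zero, List.getD_cons_succ, Nat.add_zero] at a b
      omega
  · rintro ⟨h1, h2, h3⟩
    refine ⟨by omega, ?_⟩
    intro s hs t ht
    interval_cases s <;> interval_cases t <;>
      simp only [List.getD_cons_zero, List.getD_cons_succ, Nat.add_zero] <;> omega

lemma numOcc_112 (w : List ℕ) : numOcc [1,1,2] w = (occ3 P112 w).ncard := by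
  unfold numOcc
  congr 1
  ext i
  simpa using occAt_112 w i

lemma numOcc_122 (w : List ℕ) : numOcc [1,2,2] w = (occ3 P122 w).ncard := by
  unfold numOcc
  congr 1
  ext i
  simpa using occAt_122 w i

lemma occ_append {P : ℕ → ℕ → ℕ → Prop}
    (hP : ∀ x y z, P x y z → x ≤ y ∧ y ≤ z)
    {r s : List ℕ} (hr : r ≠ [])
    (hd : s ≠ [] → s.getD 0 0 < r.getLastD 0) :
    (occ3 P (r ++ s)).ncard = (occ3 P r).ncard + (occ3 P s).ncard := by
  set m := r.length with hm
  have hm1 : 1 ≤ m := by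
    have := List.length_pos_iff.mpr hr; omega
  have key : occ3 P (r ++ s) = occ3 P r ∪ (fun j => j + m) '' occ3 P s := by
    ext i
    simp only [occ3, Set.mem_setOf_eq, Set.mem_union, Set.mem_image, List.length_append]
    constructor
    · rintro ⟨h1, h2⟩
      rcases (show i + 3 ≤ m ∨ i + 2 = m ∨ i + 1 = m ∨ m ≤ i by omega) with h | h | h | h
      · left
        rw [List.getD_append _ _ _ _ (by omega), List.getD_append _ _ _ _ (by omega),
          List.getD_append _ _ _ _ (by omega)] at h2
        exact ⟨h, h2⟩
      · -- i + 2 = m : boundary, w_{i+2} = s_0 < w_{i+1} = last r, contradiction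
        exfalso
        have hs : s ≠ [] := by
          intro hse; subst hse; simp at h1; omega
        rw [List.getD_append _ _ _ _ (by omega), List.getD_append _ _ _ _ (by omega),
          List.getD_append_right _ _ _ _ (by omega)] at h2
        have h22 := (hP _ _ _ h2).2
        have hlast : r.getD (i+1) 0 = r.getLastD 0 := by
          rw [getLastD_eq_getD hr]; congr 1; omega
        have := hd hs
        rw [show i + 2 - m = 0 by omega] at h22
        omega
      · exfalso
        have hs : s ≠ [] := by
          intro hse; subst hse; simp at h1; omega
        rw [List.getD_append _ _ _ _ (by omega),
          List.getD_append_right _ _ _ _ (by omega)] at h2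
        have h21 := (hP _ _ _ h2).1
        have hlast : r.getD i 0 = r.getLastD 0 := by
          rw [getLastD_eq_getD hr]; congr 1; omega
        have := hd hs
        rw [show i + 1 - m = 0 by omega] at h21
        omega
      · right
        refine ⟨i - m, ⟨by omega, ?_⟩, by omega⟩
        rw [List.getD_append_right _ _ _ _ (by omega), List.getD_append_right _ _ _ _ (by omega),
          List.getD_append_right _ _ _ _ (by omega)] at h2
        rw [show i - m + 1 = i + 1 - m by omega, show i - m + 2 = i + 2 - m by omega]
        exact h2
    · rintro (⟨h1, h2⟩ | ⟨j, ⟨h1, h2⟩, rfl⟩)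
      · refine ⟨by omega, ?_⟩
        rw [List.getD_append _ _ _ _ (by omega), List.getD_append _ _ _ _ (by omega),
          List.getD_append _ _ _ _ (by omega)]
        exact h2
      · refine ⟨by omega, ?_⟩
        rw [List.getD_append_right _ _ _ _ (by omega), List.getD_append_right _ _ _ _ (by omega),
          List.getD_append_right _ _ _ _ (by omega),
          show j + m - m = j by omega, show j + m + 1 - m = j + 1 by omega,
          show j + m + 2 - m = j + 2 by omega]
        exact h2
  rw [key, Set.ncard_union_eq ?_ (occ3_finite P r) ((occ3_finite P s).image _),
    Set.ncard_image_of_injective _ (fun a b h => by simpa using h)]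
  · rw [Set.disjoint_left]
    rintro i hi ⟨j, hj, rfl⟩
    have h1 := hi.1
    have : j + m + 3 ≤ m := by simpa using h1
    omega

end EquiAux

namespace EquiAux

def tr (r : List ℕ) : List ℕ :=
  (r.map (fun x => r.getD 0 0 + r.getLastD 0 - x)).reverse

lemma length_tr (r : List ℕ) : (tr r).length = r.length := by simp [tr]

lemma tr_getD {r : List ℕ} {j : ℕ} (hj : j < r.length) :
    (tr r).getD j 0 = r.getD 0 0 + r.getLastD 0 - r.getD (r.length - 1 - j) 0 := by
  have hj' : j < (tr r).length := by rw [length_tr]; exact hj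
  rw [List.getD_eq_getElem _ 0 hj', List.getD_eq_getElem _ 0 (show r.length - 1 - j < r.length by omega)]
  simp only [tr]
  rw [List.getElem_reverse]
  simp only [List.getElem_map, List.length_map]

lemma tr_head {r : List ℕ} (hr : r ≠ []) (hc : List.Chain' (· ≤ ·) r) :
    (tr r).getD 0 0 = r.getD 0 0 := by
  have h1 : 0 < r.length := List.length_pos_iff.mpr hr
  rw [tr_getD h1, Nat.sub_zero, ← getLastD_eq_getD hr]
  have := chain'_le_head hc (show r.length - 1 < r.length by omega)
  rw [← getLastD_eq_getD hr] at this
  omega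

lemma tr_last {r : List ℕ} (hr : r ≠ []) (hc : List.Chain' (· ≤ ·) r) :
    (tr r).getLastD 0 = r.getLastD 0 := by
  have h1 : 0 < r.length := List.length_pos_iff.mpr hr
  have htne : tr r ≠ [] := by
    intro h
    have := length_tr r
    rw [h] at this
    simp at this
    omega
  rw [getLastD_eq_getD htne, length_tr, tr_getD (show r.length - 1 < r.length by omega)]
  rw [show r.length - 1 - (r.length - 1) = 0 by omega]
  have := chain'_le_last hc h1
  omega

lemma tr_ne {r : List ℕ} (hr : r ≠ []) : tr r ≠ [] := by
  intro h
  have := length_tr r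
  rw [h] at this
  simp at this
  exact hr (List.length_eq_zero_iff.mp this.symm)

lemma tr_bound {r : List ℕ} (hc : List.Chain' (· ≤ ·) r) {k : ℕ} (hk : k < r.length) :
    r.getD 0 0 ≤ r.getD k 0 ∧ r.getD k 0 ≤ r.getLastD 0 :=
  ⟨chain'_le_head hc hk, chain'_le_last hc hk⟩

lemma tr_chain_le {r : List ℕ} (hc : List.Chain' (· ≤ ·) r) :
    List.Chain' (· ≤ ·) (tr r) := by
  rw [chain'_iff_getD]
  intro i hi
  rw [length_tr] at hi
  rw [tr_getD (by omega), tr_getD (by omega)]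
  have h1 := tr_bound hc (show r.length - 1 - i < r.length by omega)
  have h2 := tr_bound hc (show r.length - 1 - (i+1) < r.length by omega)
  have h3 := chain'_le_mono hc (show r.length - 1 - (i+1) ≤ r.length - 1 - i by omega)
    (show r.length - 1 - i < r.length by omega)
  omega

lemma tr_chain_step {r : List ℕ} (hc : List.Chain' (· ≤ ·) r)
    (hs : List.Chain' CStep r) (ha : 1 ≤ r.getD 0 0) :
    List.Chain' CStep (tr r) := by
  rw [chain'_iff_getD]
  intro i hi
  rw [length_tr] at hi
  rw [tr_getD (by omega), tr_getD (by omega)]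
  have h1 := tr_bound hc (show r.length - 1 - i < r.length by omega)
  have h2 := tr_bound hc (show r.length - 1 - (i+1) < r.length by omega)
  have h3 := (chain'_iff_getD.mp hs) (r.length - 1 - (i+1)) (by omega)
  rw [show r.length - 1 - (i+1) + 1 = r.length - 1 - i by omega] at h3
  unfold CStep at h3 ⊢
  omega

lemma tr_tr {r : List ℕ} (hc : List.Chain' (· ≤ ·) r) : tr (tr r) = r := by
  rcases eq_or_ne r [] with rfl | hr
  · simp [tr]
  have hlen : (tr r).length = r.length := length_tr r
  apply List.ext_getElem (by rw [length_tr, hlen])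
  intro j hj hj'
  rw [← List.getD_eq_getElem _ 0 hj, ← List.getD_eq_getElem _ 0 hj']
  rw [tr_getD (show j < (tr r).length by rw [hlen]; exact hj')]
  rw [hlen, tr_head hr hc, tr_last hr hc]
  rw [tr_getD (show r.length - 1 - j < r.length by omega),
    show r.length - 1 - (r.length - 1 - j) = j by omega]
  have := tr_bound hc hj'
  omega

lemma tr_occ_112 {r : List ℕ} (hc : List.Chain' (· ≤ ·) r) :
    (occ3 P122 (tr r)).ncard = (occ3 P112 r).ncard := by
  have key : occ3 P122 (tr r) = (fun i => r.length - 3 - i) '' occ3 P112 r := by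
    ext j
    simp only [occ3, Set.mem_setOf_eq, Set.mem_image, length_tr, P112, P122]
    constructor
    · rintro ⟨h1, h2⟩
      refine ⟨r.length - 3 - j, ⟨by omega, ?_⟩, by omega⟩
      set i := r.length - 3 - j with hi
      rw [tr_getD (by omega), tr_getD (by omega), tr_getD (by omega)] at h2
      rw [show r.length - 1 - j = i + 2 by omega, show r.length - 1 - (j+1) = i + 1 by omega,
        show r.length - 1 - (j+2) = i by omega] at h2
      have b0 := tr_bound hc (show i < r.length by omega)
      have b1 := tr_bound hc (show i + 1 < r.length by omega)
      have b2 := tr_bound hc (show i + 2 < r.length by omega)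
      omega
    · rintro ⟨i, ⟨h1, h2⟩, rfl⟩
      refine ⟨by omega, ?_⟩
      rw [tr_getD (by omega), tr_getD (by omega), tr_getD (by omega)]
      rw [show r.length - 1 - (r.length - 3 - i) = i + 2 by omega,
        show r.length - 1 - (r.length - 3 - i + 1) = i + 1 by omega,
        show r.length - 1 - (r.length - 3 - i + 2) = i by omega]
      have b0 := tr_bound hc (show i < r.length by omega)
      have b1 := tr_bound hc (show i + 1 < r.length by omega)
      have b2 := tr_bound hc (show i + 2 < r.length by omega)
      omega
  rw [key]
  apply Set.ncard_image_of_injOn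
  intro x hx y hy hxy
  have hx3 := hx.1
  have hy3 := hy.1
  simp only at hxy
  omega

lemma tr_occ_122 {r : List ℕ} (hc : List.Chain' (· ≤ ·) r) :
    (occ3 P112 (tr r)).ncard = (occ3 P122 r).ncard := by
  have key : occ3 P112 (tr r) = (fun i => r.length - 3 - i) '' occ3 P122 r := by
    ext j
    simp only [occ3, Set.mem_setOf_eq, Set.mem_image, length_tr, P112, P122]
    constructor
    · rintro ⟨h1, h2⟩
      refine ⟨r.length - 3 - j, ⟨by omega, ?_⟩, by omega⟩
      set i := r.length - 3 - j with hi
      rw [tr_getD (by omega), tr_getD (by omega), tr_getD (by omega)] at h2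
      rw [show r.length - 1 - j = i + 2 by omega, show r.length - 1 - (j+1) = i + 1 by omega,
        show r.length - 1 - (j+2) = i by omega] at h2
      have b0 := tr_bound hc (show i < r.length by omega)
      have b1 := tr_bound hc (show i + 1 < r.length by omega)
      have b2 := tr_bound hc (show i + 2 < r.length by omega)
      omega
    · rintro ⟨i, ⟨h1, h2⟩, rfl⟩
      refine ⟨by omega, ?_⟩
      rw [tr_getD (by omega), tr_getD (by omega), tr_getD (by omega)]
      rw [show r.length - 1 - (r.length - 3 - i) = i + 2 by omega,
        show r.length - 1 - (r.length - 3 - i + 1) = i + 1 by omega,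
        show r.length - 1 - (r.length - 3 - i + 2) = i by omega]
      have b0 := tr_bound hc (show i < r.length by omega)
      have b1 := tr_bound hc (show i + 1 < r.length by omega)
      have b2 := tr_bound hc (show i + 2 < r.length by omega)
      omega
  rw [key]
  apply Set.ncard_image_of_injOn
  intro x hx y hy hxy
  have hx3 := hx.1
  have hy3 := hy.1
  simp only at hxy
  omega

end EquiAux

namespace EquiAux

def splitRun : List ℕ → List ℕ × List ℕ
  | [] => ([], [])
  | [a] => ([a], [])
  | a :: b :: t =>
    if a ≤ b then ((a :: (splitRun (b :: t)).1), (splitRun (b :: t)).2)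
    else ([a], b :: t)

lemma sp_append : ∀ w : List ℕ, (splitRun w).1 ++ (splitRun w).2 = w := by
  intro w
  induction w using splitRun.induct with
  | case1 => simp [splitRun]
  | case2 a => simp [splitRun]
  | case3 a b t h ih => simp [splitRun, h, ih]
  | case4 a b t h => simp [splitRun, h]

lemma sp_ne : ∀ w : List ℕ, w ≠ [] → (splitRun w).1 ≠ [] := by
  intro w
  induction w using splitRun.induct with
  | case1 => simp
  | case2 a => simp [splitRun]
  | case3 a b t h ih => simp [splitRun, h]
  | case4 a b t h => simp [splitRun, h]

lemma sp_chain : ∀ w : List ℕ, List.Chain' (· ≤ ·) (splitRun w).1 := by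
  intro w
  induction w using splitRun.induct with
  | case1 => simp [splitRun, List.Chain']
  | case2 a => simp [splitRun, List.Chain']
  | case3 a b t h ih =>
    simp only [splitRun, if_pos h]
    have hne : (splitRun (b :: t)).1 ≠ [] := sp_ne _ (by simp)
    have hhead : (splitRun (b :: t)).1.getD 0 0 = b := by
      have := sp_append (b :: t)
      rcases hx : (splitRun (b :: t)).1 with _ | ⟨c, u⟩
      · exact absurd hx hne
      · rw [hx] at this
        simp at this
        simp [this.1]
    rcases hx : (splitRun (b :: t)).1 with _ | ⟨c, u⟩
    · exact absurd hx hne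
    · rw [hx] at ih hhead
      simp at hhead
      subst hhead
      exact List.IsChain.cons_cons h ih
  | case4 a b t h => simp [splitRun, h, List.Chain']

lemma sp_desc : ∀ w : List ℕ, (splitRun w).2 ≠ [] →
    (splitRun w).2.getD 0 0 < (splitRun w).1.getLastD 0 := by
  intro w
  induction w using splitRun.induct with
  | case1 => simp [splitRun]
  | case2 a => simp [splitRun]
  | case3 a b t h ih =>
    intro hne
    simp only [splitRun, if_pos h] at hne ⊢
    have h1 : (splitRun (b :: t)).1 ≠ [] := sp_ne _ (by simp)
    have := ih hne
    rw [show (a :: (splitRun (b :: t)).1).getLastD 0 = (splitRun (b :: t)).1.getLastD 0 by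
      rcases hx : (splitRun (b :: t)).1 with _ | ⟨c, u⟩
      · exact absurd hx h1
      · simp]
    exact this
  | case4 a b t h =>
    intro _
    simp only [splitRun, if_neg h]
    have h2 : [a].getLastD 0 = a := rfl
    rw [h2]
    simp only [List.getD_cons_zero]
    omega

lemma sp_len {w : List ℕ} (hw : w ≠ []) : (splitRun w).2.length < w.length := by
  have h1 := sp_append w
  have h2 := sp_ne w hw
  have := congrArg List.length h1
  simp only [List.length_append] at this
  have := List.length_pos_iff.mpr h2
  omega

def f (w : List ℕ) : List ℕ :=
  if h : w = [] then [] else tr (splitRun w).1 ++ f (splitRun w).2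
  termination_by w.length
  decreasing_by exact sp_len h

lemma f_nil : f [] = [] := by rw [f]; simp

lemma f_eq {w : List ℕ} (h : w ≠ []) :
    f w = tr (splitRun w).1 ++ f (splitRun w).2 := by
  rw [f]; simp [h]

lemma splitRun_append {x y : List ℕ} (hx : x ≠ []) (hc : List.Chain' (· ≤ ·) x)
    (hd : y ≠ [] → y.getD 0 0 < x.getLastD 0) : splitRun (x ++ y) = (x, y) := by
  induction x with
  | nil => exact absurd rfl hx
  | cons a x' ih =>
    rcases eq_or_ne x' [] with rfl | hx'
    · rcases hy : y with _ | ⟨b, t⟩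
      · simp [splitRun]
      · have hb : b < a := by
          have := hd (by simp [hy])
          rw [hy] at this
          have h2 : [a].getLastD 0 = a := rfl
          rw [h2] at this
          simpa using this
        simp only [List.cons_append, List.nil_append, splitRun]
        rw [if_neg (show ¬ a ≤ b by omega)]
    · rcases hx'' : x' with _ | ⟨c, u⟩
      · exact absurd hx'' hx'
      subst hx''
      have hac : a ≤ c := List.isChain_cons_cons.mp hc |>.1
      have ihh := ih hx' (List.isChain_cons_cons.mp hc).2
        (by
          intro hy
          have := hd hy
          simpa using this)
      simp only [List.cons_append, splitRun, if_pos hac]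
      show (a :: (splitRun (c :: (u ++ y))).1, (splitRun (c :: (u ++ y))).2) = (a :: c :: u, y)
      rw [List.cons_append] at ihh
      rw [ihh]

lemma runStart_append {r s : List ℕ} (hr : r ≠ []) (hc : List.Chain' (· ≤ ·) r)
    (hd : s ≠ [] → s.getD 0 0 < r.getLastD 0) (i : ℕ) :
    RunStart (r ++ s) i ↔ (i = 0 ∨ (r.length ≤ i ∧ RunStart s (i - r.length))) := by
  set m := r.length with hm
  have hm1 : 1 ≤ m := List.length_pos_iff.mpr hr
  unfold RunStart
  simp only [List.length_append]
  rcases (show i = 0 ∨ (0 < i ∧ i < m) ∨ i = m ∨ m < i by omega) with rfl | ⟨h0, hlt⟩ | rfl | hgt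
  · constructor
    · intro _
      exact Or.inl rfl
    · intro _
      exact ⟨by omega, Or.inl rfl⟩
  · constructor
    · rintro ⟨hil, h1 | h2⟩
      · omega
      · exfalso
        rw [List.getD_append _ _ _ _ (by omega), List.getD_append _ _ _ _ (by omega)] at h2
        have := chain'_le_mono hc (show i - 1 ≤ i by omega) (show i < m by omega)
        omega
    · rintro (h | ⟨h, _⟩) <;> omega
  · constructor
    · rintro ⟨hil, _⟩
      right
      have hs : s ≠ [] := by
        intro h; subst h; simp at hil; omega
      refine ⟨le_refl _, ?_, Or.inl (by omega)⟩
      simp only [Nat.sub_self]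
      have := List.length_pos_iff.mpr hs
      omega
    · rintro (h | ⟨_, hrs⟩)
      · omega
      · have hsl : 0 < s.length := by
          rcases hrs with ⟨h1, _⟩
          omega
        have hs : s ≠ [] := List.length_pos_iff.mp hsl
        refine ⟨by omega, Or.inr ?_⟩
        rw [List.getD_append_right _ _ _ _ (le_refl _), Nat.sub_self,
          List.getD_append _ _ _ _ (by omega)]
        have : r.getD (m - 1) 0 = r.getLastD 0 := (getLastD_eq_getD hr).symm
        rw [this]
        exact hd hs
  · constructor
    · rintro ⟨hil, h1 | h2⟩
      · omega
      · right
        refine ⟨by omega, by omega, Or.inr ?_⟩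
        rw [List.getD_append_right _ _ _ _ (by omega),
          List.getD_append_right _ _ _ _ (by omega)] at h2
        rw [show i - 1 - m = i - m - 1 by omega] at h2
        exact h2
    · rintro (h | ⟨_, h1, h2⟩)
      · omega
      refine ⟨by omega, Or.inr ?_⟩
      rw [List.getD_append_right _ _ _ _ (by omega),
        List.getD_append_right _ _ _ _ (by omega),
        show i - 1 - m = i - m - 1 by omega]
      rcases h2 with h | h
      · omega
      · exact h

end EquiAux

namespace EquiAux

lemma P112_mono : ∀ x y z : ℕ, P112 x y z → x ≤ y ∧ y ≤ z := by
  intro x y z h; unfold P112 at h; omega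

lemma P122_mono : ∀ x y z : ℕ, P122 x y z → x ≤ y ∧ y ≤ z := by
  intro x y z h; unfold P122 at h; omega

lemma occ3_nil (P : ℕ → ℕ → ℕ → Prop) : occ3 P [] = ∅ := by
  ext i; simp [occ3]

lemma f_main : ∀ N : ℕ, ∀ w : List ℕ, w.length ≤ N →
    (∀ k < w.length, 1 ≤ w.getD k 0) → List.Chain' CStep w →
    ((f w).length = w.length ∧
     (∀ i, RunStart (f w) i ↔ RunStart w i) ∧
     (∀ i, RunStart w i → (f w).getD i 0 = w.getD i 0) ∧
     List.Chain' CStep (f w) ∧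
     (∀ k < w.length, 1 ≤ (f w).getD k 0) ∧
     f (f w) = w ∧
     (occ3 P112 (f w)).ncard = (occ3 P122 w).ncard ∧
     (occ3 P122 (f w)).ncard = (occ3 P112 w).ncard) := by
  intro N
  induction N with
  | zero =>
    intro w hlen _ _
    have : w = [] := List.length_eq_zero_iff.mp (by omega)
    subst this
    refine ⟨by rw [f_nil], fun i => by rw [f_nil], fun i _ => by rw [f_nil],
      by rw [f_nil]; simp [List.Chain'], by simp, by rw [f_nil, f_nil],
      by rw [f_nil, occ3_nil, occ3_nil], by rw [f_nil, occ3_nil, occ3_nil]⟩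
  | succ N IH =>
    intro w hlen pos chain
    rcases eq_or_ne w [] with rfl | hwne
    · refine ⟨by rw [f_nil], fun i => by rw [f_nil], fun i _ => by rw [f_nil],
        by rw [f_nil]; simp [List.Chain'], by simp, by rw [f_nil, f_nil],
        by rw [f_nil, occ3_nil, occ3_nil], by rw [f_nil, occ3_nil, occ3_nil]⟩
    rcases hsp : splitRun w with ⟨r, s⟩
    have hw : r ++ s = w := by
      have := sp_append w
      rw [hsp] at this
      exact this
    subst hw
    have hrne : r ≠ [] := by have := sp_ne _ hwne; rw [hsp] at this; exact this
    have hcr : List.Chain' (· ≤ ·) r := by have := sp_chain (r ++ s); rw [hsp] at this; exact this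
    have hdesc : s ≠ [] → s.getD 0 0 < r.getLastD 0 := by
      intro h; have := sp_desc (r ++ s); rw [hsp] at this; exact this h
    have hm1 : 1 ≤ r.length := List.length_pos_iff.mpr hrne
    have hlen' : (r ++ s).length = r.length + s.length := by simp
    simp only [List.Chain'] at chain
    rw [List.isChain_append] at chain
    obtain ⟨chain_r, chain_s, bdry⟩ := chain
    have pos_r : ∀ k < r.length, 1 ≤ r.getD k 0 := by
      intro k hk
      have := pos k (by omega)
      rwa [List.getD_append r s 0 k hk] at this
    have pos_s : ∀ k < s.length, 1 ≤ s.getD k 0 := by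
      intro k hk
      have := pos (r.length + k) (by omega)
      rwa [List.getD_append_right r s 0 (r.length + k) (by omega),
        show r.length + k - r.length = k by omega] at this
    have hslen : s.length ≤ N := by omega
    obtain ⟨ih_len, ih_rs, ih_gd, ih_chain, ih_pos, ih_inv, ih_occ1, ih_occ2⟩ :=
      IH s hslen pos_s chain_s
    have hfw : f (r ++ s) = tr r ++ f s := by rw [f_eq hwne, hsp]
    have htrne : tr r ≠ [] := tr_ne hrne
    have hctr : List.Chain' (· ≤ ·) (tr r) := tr_chain_le hcr
    have htr_len : (tr r).length = r.length := length_tr r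
    have hfs_ne_iff : f s ≠ [] ↔ s ≠ [] := by
      constructor
      · intro h hs; subst hs; rw [f_nil] at h; exact h rfl
      · intro h hf
        have := ih_len
        rw [hf] at this
        exact h (List.length_eq_zero_iff.mp this.symm)
    have hrs_s0 : s ≠ [] → RunStart s 0 :=
      fun h => ⟨List.length_pos_iff.mpr h, Or.inl rfl⟩
    have hfs_head : s ≠ [] → (f s).getD 0 0 = s.getD 0 0 :=
      fun h => ih_gd 0 (hrs_s0 h)
    have hd' : f s ≠ [] → (f s).getD 0 0 < (tr r).getLastD 0 := by
      intro h
      have hsne := hfs_ne_iff.mp h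
      rw [hfs_head hsne, tr_last hrne hcr]
      exact hdesc hsne
    have pos_r0 : 1 ≤ r.getD 0 0 := pos_r 0 (by omega)
    refine ⟨?_, ?_, ?_, ?_, ?_, ?_, ?_, ?_⟩
    · rw [hfw]; simp [htr_len, ih_len]
    · intro i
      rw [hfw, runStart_append htrne hctr hd' i, runStart_append hrne hcr hdesc i, htr_len]
      exact or_congr Iff.rfl (and_congr Iff.rfl (ih_rs _))
    · intro i hi
      rw [runStart_append hrne hcr hdesc i] at hi
      rw [hfw]
      rcases hi with rfl | ⟨hmi, hrs⟩
      · rw [List.getD_append r s 0 0 (by omega),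
          List.getD_append (tr r) (f s) 0 0 (by rw [htr_len]; omega)]
        exact tr_head hrne hcr
      · rw [List.getD_append_right r s 0 i (by omega),
          List.getD_append_right (tr r) (f s) 0 i (by rw [htr_len]; omega), htr_len]
        exact ih_gd _ hrs
    · rw [hfw]
      simp only [List.Chain']
      rw [List.isChain_append]
      refine ⟨tr_chain_step hcr chain_r pos_r0, ih_chain, ?_⟩
      intro x hx y hy
      have hfsne : f s ≠ [] := by intro h; rw [h] at hy; simp at hy
      have hsne := hfs_ne_iff.mp hfsne
      rw [getLast?_eq htrne] at hx
      rw [head?_eq hfsne] at hy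
      simp only [Option.mem_some_iff] at hx hy
      subst hx; subst hy
      rw [tr_last hrne hcr, hfs_head hsne]
      apply bdry
      · rw [getLast?_eq hrne]; rfl
      · rw [head?_eq hsne]; rfl
    · intro k hk
      rw [hfw]
      rcases lt_or_ge k r.length with h | h
      · rw [List.getD_append (tr r) (f s) 0 k (by rw [htr_len]; omega)]
        rw [tr_getD (by omega)]
        have hb := chain'_le_last hcr (show r.length - 1 - k < r.length by omega)
        omega
      · rw [List.getD_append_right (tr r) (f s) 0 k (by rw [htr_len]; omega), htr_len]
        apply ih_pos
        rw [hlen'] at hk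
        omega
    · rw [hfw, f_eq (by intro h; exact htrne (List.append_eq_nil_iff.mp h).1),
        splitRun_append htrne hctr hd', tr_tr hcr, ih_inv]
    · rw [hfw, occ_append P112_mono htrne hd', occ_append P122_mono hrne hdesc,
        tr_occ_122 hcr, ih_occ1]
    · rw [hfw, occ_append P122_mono htrne hd', occ_append P112_mono hrne hdesc,
        tr_occ_112 hcr, ih_occ2]

end EquiAux

namespace EquiAux

lemma isCatalan_chain {w : List ℕ} (h : IsCatalan w) :
    List.Chain' CStep w ∧ (∀ k < w.length, 1 ≤ w.getD k 0) := by
  obtain ⟨hne, h1, h2⟩ := h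
  constructor
  · rw [chain'_iff_getD]
    intro i hi
    exact h2 i hi
  · intro k hk
    cases k with
    | zero => omega
    | succ k => exact (h2 k hk).1

lemma chain_isCatalan {w : List ℕ} (hne : w ≠ []) (h1 : w.getD 0 0 = 1)
    (hc : List.Chain' CStep w) : IsCatalan w :=
  ⟨hne, h1, fun i hi => (chain'_iff_getD.mp hc) i hi⟩

lemma f_key {n : ℕ} (hn : 1 ≤ n) {w : List ℕ} (hw : w ∈ FlatCat n) :
    f w ∈ FlatCat n ∧ f (f w) = w ∧
      numOcc [1,2,2] (f w) = numOcc [1,1,2] w ∧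
      numOcc [1,1,2] (f w) = numOcc [1,2,2] w := by
  obtain ⟨hlen, hcat, hflat⟩ := hw
  have hne : w ≠ [] := by
    intro h; subst h; simp at hlen; omega
  obtain ⟨chain, pos⟩ := isCatalan_chain hcat
  obtain ⟨blen, brs, bgd, bchain, bpos, binv, bocc1, bocc2⟩ :=
    f_main w.length w le_rfl pos chain
  have hrs0 : RunStart w 0 := ⟨List.length_pos_iff.mpr hne, Or.inl rfl⟩
  have hfne : f w ≠ [] := by
    intro h
    rw [h] at blen
    exact hne (List.length_eq_zero_iff.mp blen.symm)
  refine ⟨⟨by rw [blen, hlen], ?_, ?_⟩, binv, ?_, ?_⟩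
  · refine chain_isCatalan hfne ?_ bchain
    rw [bgd 0 hrs0]
    exact hcat.2.1
  · intro i j hi hj hij
    have hi' := (brs i).mp hi
    have hj' := (brs j).mp hj
    rw [bgd i hi', bgd j hj']
    exact hflat i j hi' hj' hij
  · rw [numOcc_122, numOcc_112, bocc2]
  · rw [numOcc_112, numOcc_122, bocc1]

end EquiAux


/-- The consecutive patterns `112` and `122` are equidistributed on flattened
Catalan words of length `n` for every `n ≥ 1`. -/
theorem equidist_112_122 (n : ℕ) (hn : 1 ≤ n) (k : ℕ) :
    {w ∈ FlatCat n | numOcc [1, 1, 2] w = k}.ncard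
      = {w ∈ FlatCat n | numOcc [1, 2, 2] w = k}.ncard := by
  have himg : EquiAux.f '' {w ∈ FlatCat n | numOcc [1, 1, 2] w = k}
      = {w ∈ FlatCat n | numOcc [1, 2, 2] w = k} := by
    ext u
    simp only [Set.mem_image, Set.mem_setOf_eq]
    constructor
    · rintro ⟨w, ⟨hwF, hwk⟩, rfl⟩
      obtain ⟨hF, _, h122, _⟩ := EquiAux.f_key hn hwF
      exact ⟨hF, by rw [h122, hwk]⟩
    · rintro ⟨huF, huk⟩
      obtain ⟨hF, hinv, _, h112⟩ := EquiAux.f_key hn huF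
      exact ⟨EquiAux.f u, ⟨hF, by rw [h112, huk]⟩, hinv⟩
  rw [← himg]
  apply (Set.ncard_image_of_injOn ?_).symm
  intro x hx y hy hxy
  obtain ⟨_, hxinv, _, _⟩ := EquiAux.f_key hn hx.1
  obtain ⟨_, hyinv, _, _⟩ := EquiAux.f_key hn hy.1
  rw [← hxinv, hxy, hyinv]
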